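/- For coprime positive integers M, N, κ = N/M, and q = e^{2πiκ}, the M×M clock matrix C (eigenvalues e^{2πijN/M}) and shift matrix S satisfying CS = qSC yield operators J₃ with q^{±J₃} := C^{±1} and J_± := (D(±e₁±e₂) - D(∓e₁±e₂))/(q - q⁻¹) where D(m) = q^{-m₁m₂/2}C^{m₁}S^{m₂}, which satisfy the U_q(sl₂) relation [J₊, J₋] = (q^{2J₃} - q^{-2J₃})/(q - q⁻¹), i.e., (q-q⁻¹)²[J₊,J₋] = (q-q⁻¹)(C² - C⁻²). -/

import Mathlib

noncomputable section

open scoped Real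
open Matrix

/-- The clock matrix `C = diag(1, q, …, q^{M-1})`. -/
def clockM (M : ℕ) (q : ℂ) : Matrix (Fin M) (Fin M) ℂ :=
  Matrix.diagonal (fun j => q ^ (j : ℕ))

/-- The shift matrix `S`, the cyclic permutation sending `e_j` to `e_{j+1 mod M}`. -/
def shiftM (M : ℕ) : Matrix (Fin M) (Fin M) ℂ :=
  Matrix.of fun i j => if (i : ℕ) = ((j : ℕ) + 1) % M then 1 else 0

/-- The magnetic translation `D(m₁,m₂) = q^{-m₁m₂/2} C^{m₁} S^{m₂}` with
`q^{-m₁m₂/2} := e^{-πiκ m₁m₂}`, `κ = N/M`. -/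
def Dop (M N : ℕ) (m₁ m₂ : ℤ) : Matrix (Fin M) (Fin M) ℂ :=
  Complex.exp (-(π * Complex.I * ((N : ℝ) / (M : ℝ)) * m₁ * m₂)) •
    (clockM M (Complex.exp (2 * π * Complex.I * N / M)) ^ m₁ * shiftM M ^ m₂)

/-- The inverse of the shift matrix (its transpose). -/
def shiftInv (M : ℕ) : Matrix (Fin M) (Fin M) ℂ :=
  Matrix.of fun i j => if (j : ℕ) = ((i : ℕ) + 1) % M then 1 else 0

/-- The inverse of the clock matrix. -/
def clockInv (M : ℕ) (q : ℂ) : Matrix (Fin M) (Fin M) ℂ :=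
  Matrix.diagonal (fun j => (q ^ (j : ℕ))⁻¹)

lemma succ_mod_inj {M k k' : ℕ} (hk : k < M) (hk' : k' < M)
    (h : (k + 1) % M = (k' + 1) % M) : k = k' := by
  have e : ∀ a : ℕ, a < M → (a + 1) % M = if a + 1 = M then 0 else a + 1 := by
    intro a ha
    split_ifs with h1
    · simp [h1]
    · exact Nat.mod_eq_of_lt (by omega)
  rw [e k hk, e k' hk'] at h
  split_ifs at h <;> omega

lemma prev_spec {M : ℕ} (hM : 0 < M) (i : Fin M) :
    ((((i : ℕ) + M - 1) % M) + 1) % M = (i : ℕ) := by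
  rw [Nat.mod_add_mod]
  have : (i : ℕ) + M - 1 + 1 = (i : ℕ) + M := by omega
  rw [this, Nat.add_mod_right, Nat.mod_eq_of_lt i.isLt]

lemma shift_mul_shiftInv {M : ℕ} (hM : 0 < M) : shiftM M * shiftInv M = 1 := by
  ext i j
  rw [Matrix.mul_apply]
  have hlt : ((i : ℕ) + M - 1) % M < M := Nat.mod_lt _ hM
  rw [Finset.sum_eq_single (⟨((i : ℕ) + M - 1) % M, hlt⟩ : Fin M)]
  · simp only [shiftM, shiftInv, Matrix.of_apply, prev_spec hM i]
    simp [Matrix.one_apply, Fin.ext_iff, eq_comm]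
  · intro b _ hb
    simp only [shiftM, shiftInv, Matrix.of_apply]
    split_ifs with h1 h2
    · exfalso
      apply hb
      have := prev_spec hM i
      exact Fin.ext (succ_mod_inj b.isLt hlt (by rw [this, h1]))
    · ring
    · ring
    · ring
  · intro h; exact absurd (Finset.mem_univ _) h

lemma shiftInv_mul_shift {M : ℕ} (hM : 0 < M) : shiftInv M * shiftM M = 1 := by
  ext i j
  rw [Matrix.mul_apply]
  have hlt : (((i : ℕ) + 1) % M) < M := Nat.mod_lt _ hM
  rw [Finset.sum_eq_single (⟨((i : ℕ) + 1) % M, hlt⟩ : Fin M)]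
  · simp only [shiftM, shiftInv, Matrix.of_apply, if_pos rfl, one_mul, Matrix.one_apply]
    by_cases h : ((i : ℕ) + 1) % M = ((j : ℕ) + 1) % M
    · rw [if_pos h, if_pos (Fin.ext (succ_mod_inj i.isLt j.isLt h))]; simp
    · rw [if_neg h]
      simp [show ¬ i = j from fun hh => h (by rw [hh])]
  · intro b _ hb
    simp only [shiftM, shiftInv, Matrix.of_apply]
    split_ifs with h1
    · exact absurd (Fin.ext h1) hb
    all_goals ring
  · intro h; exact absurd (Finset.mem_univ _) h

lemma pow_mod_eq {q : ℂ} {M : ℕ} (hqM : q ^ M = 1) (a : ℕ) : q ^ (a % M) = q ^ a := by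
  conv_rhs => rw [← Nat.div_add_mod a M, pow_add, pow_mul, hqM, one_pow, one_mul]

lemma clock_mul_clockInv {M : ℕ} {q : ℂ} (hq0 : q ≠ 0) :
    clockM M q * clockInv M q = 1 := by
  rw [clockM, clockInv, Matrix.diagonal_mul_diagonal]
  have : (fun j : Fin M => q ^ (j : ℕ) * (q ^ (j : ℕ))⁻¹) = fun _ => (1 : ℂ) :=
    funext fun j => mul_inv_cancel₀ (pow_ne_zero _ hq0)
  rw [this, Matrix.diagonal_one]

lemma clockInv_mul_clock {M : ℕ} {q : ℂ} (hq0 : q ≠ 0) :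
    clockInv M q * clockM M q = 1 := by
  rw [clockM, clockInv, Matrix.diagonal_mul_diagonal]
  have : (fun j : Fin M => (q ^ (j : ℕ))⁻¹ * q ^ (j : ℕ)) = fun _ => (1 : ℂ) :=
    funext fun j => inv_mul_cancel₀ (pow_ne_zero _ hq0)
  rw [this, Matrix.diagonal_one]

lemma clock_mul_shift {M : ℕ} {q : ℂ} (hqM : q ^ M = 1) :
    clockM M q * shiftM M = q • (shiftM M * clockM M q) := by
  ext i j
  simp only [clockM, shiftM, Matrix.diagonal_mul, Matrix.mul_diagonal, Matrix.smul_apply,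
    Matrix.of_apply, smul_eq_mul]
  split_ifs with h
  · rw [h, pow_mod_eq hqM, pow_succ]; ring
  · ring

lemma shift_mul_clockInv {M : ℕ} {q : ℂ} (hq0 : q ≠ 0) (hqM : q ^ M = 1) :
    shiftM M * clockInv M q = q • (clockInv M q * shiftM M) := by
  ext i j
  simp only [clockInv, shiftM, Matrix.diagonal_mul, Matrix.mul_diagonal, Matrix.smul_apply,
    Matrix.of_apply, smul_eq_mul]
  split_ifs with h
  · rw [h, pow_mod_eq hqM, pow_succ, mul_inv]
    field_simp
  · ring

lemma shiftInv_mul_clock {M : ℕ} {q : ℂ} (hqM : q ^ M = 1) :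
    shiftInv M * clockM M q = q • (clockM M q * shiftInv M) := by
  ext i j
  simp only [clockM, shiftInv, Matrix.diagonal_mul, Matrix.mul_diagonal, Matrix.smul_apply,
    Matrix.of_apply, smul_eq_mul]
  split_ifs with h
  · rw [h, pow_mod_eq hqM, pow_succ]
    ring
  · ring

lemma shiftInv_mul_clockInv {M : ℕ} {q : ℂ} (hq0 : q ≠ 0) (hqM : q ^ M = 1) :
    shiftInv M * clockInv M q = q⁻¹ • (clockInv M q * shiftInv M) := by
  ext i j
  simp only [clockInv, shiftInv, Matrix.diagonal_mul, Matrix.mul_diagonal, Matrix.smul_apply,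
    Matrix.of_apply, smul_eq_mul]
  split_ifs with h
  · rw [h, pow_mod_eq hqM, pow_succ, mul_inv]
    ring
  · ring

/-- For `κ = N/M` with `gcd(M,N)=1`, `q = e^{2πiκ}`, the light-cone combinations
`J₊ = (D(1,1)-D(-1,1))/(q-q⁻¹)`, `J₋ = (D(-1,-1)-D(1,-1))/(q-q⁻¹)` of magnetic translations
satisfy the `U_q(sl₂)` relation `(q-q⁻¹)²[J₊,J₋] = (q-q⁻¹)(C² - C⁻²)`. -/
theorem Uq_sl2_from_magnetic_translations
    (M N : ℕ) (hM : 1 < M) (hN : 0 < N) (hMN : Nat.Coprime M N)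
    (q : ℂ) (hq : q = Complex.exp (2 * π * Complex.I * N / M))
    (Jp Jm : Matrix (Fin M) (Fin M) ℂ)
    (hJp : Jp = (q - q⁻¹)⁻¹ • (Dop M N 1 1 - Dop M N (-1) 1))
    (hJm : Jm = (q - q⁻¹)⁻¹ • (Dop M N (-1) (-1) - Dop M N 1 (-1))) :
    ((q - q⁻¹) ^ 2) • (Jp * Jm - Jm * Jp)
      = (q - q⁻¹) • (clockM M q ^ (2 : ℤ) - clockM M q ^ (-2 : ℤ)) := by
  have hM0 : 0 < M := by omega
  have hq0 : q ≠ 0 := by rw [hq]; exact Complex.exp_ne_zero _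
  have hMc : (M : ℂ) ≠ 0 := Nat.cast_ne_zero.mpr (by omega)
  have hqM : q ^ M = 1 := by
    rw [hq, ← Complex.exp_nat_mul]
    rw [show (M : ℂ) * (2 * π * Complex.I * N / M) = (N : ℤ) * (2 * π * Complex.I) by
      push_cast
      field_simp]
    exact Complex.exp_int_mul_two_pi_mul_I N
  set C := clockM M q with hC
  set Ci := clockInv M q with hCi
  set S := shiftM M with hS
  set Si := shiftInv M with hSi
  have hCCi : C * Ci = 1 := clock_mul_clockInv hq0
  have hCiC : Ci * C = 1 := clockInv_mul_clock hq0
  have hSSi : S * Si = 1 := shift_mul_shiftInv hM0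
  have hSiS : Si * S = 1 := shiftInv_mul_shift hM0
  -- commutation relations, in right-associated applied form
  have e1 : ∀ X : Matrix (Fin M) (Fin M) ℂ, S * (Ci * X) = q • (Ci * (S * X)) := by
    intro X
    rw [← mul_assoc, shift_mul_clockInv hq0 hqM, Matrix.smul_mul, mul_assoc]
  have e2 : ∀ X : Matrix (Fin M) (Fin M) ℂ, S * (C * X) = q⁻¹ • (C * (S * X)) := by
    intro X
    have h' : S * C = q⁻¹ • (C * S) := by
      rw [clock_mul_shift hqM (M := M) (q := q), smul_smul, inv_mul_cancel₀ hq0, one_smul]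
    rw [← mul_assoc, h', Matrix.smul_mul, mul_assoc]
  have e3 : ∀ X : Matrix (Fin M) (Fin M) ℂ, Si * (C * X) = q • (C * (Si * X)) := by
    intro X
    rw [← mul_assoc, shiftInv_mul_clock hqM, Matrix.smul_mul, mul_assoc]
  have e4 : ∀ X : Matrix (Fin M) (Fin M) ℂ, Si * (Ci * X) = q⁻¹ • (Ci * (Si * X)) := by
    intro X
    rw [← mul_assoc, shiftInv_mul_clockInv hq0 hqM, Matrix.smul_mul, mul_assoc]
  -- the eight basic products
  have h1 : C * (S * (Ci * Si)) = q • (1 : Matrix (Fin M) (Fin M) ℂ) := by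
    rw [e1, hSSi, mul_one, Matrix.mul_smul, hCCi]
  have h2 : C * (S * (C * Si)) = q⁻¹ • (C * C) := by
    rw [e2, hSSi, mul_one, Matrix.mul_smul]
  have h3 : Ci * (S * (Ci * Si)) = q • (Ci * Ci) := by
    rw [e1, hSSi, mul_one, Matrix.mul_smul]
  have h4 : Ci * (S * (C * Si)) = q⁻¹ • (1 : Matrix (Fin M) (Fin M) ℂ) := by
    rw [e2, hSSi, mul_one, Matrix.mul_smul, hCiC]
  have g1 : Ci * (Si * (C * S)) = q • (1 : Matrix (Fin M) (Fin M) ℂ) := by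
    rw [e3, hSiS, mul_one, Matrix.mul_smul, hCiC]
  have g2 : Ci * (Si * (Ci * S)) = q⁻¹ • (Ci * Ci) := by
    rw [e4, hSiS, mul_one, Matrix.mul_smul]
  have g3 : C * (Si * (C * S)) = q • (C * C) := by
    rw [e3, hSiS, mul_one, Matrix.mul_smul]
  have g4 : C * (Si * (Ci * S)) = q⁻¹ • (1 : Matrix (Fin M) (Fin M) ℂ) := by
    rw [e4, hSiS, mul_one, Matrix.mul_smul, hCCi]
  -- scalar prefactors
  set α : ℂ := Complex.exp (-(π * Complex.I * ((N : ℝ) / (M : ℝ)))) with hα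
  set β : ℂ := Complex.exp (π * Complex.I * ((N : ℝ) / (M : ℝ))) with hβ
  have hαβ : α * β = 1 := by
    rw [hα, hβ, ← Complex.exp_add]
    simp
  have hαα : α * α = q⁻¹ := by
    rw [hα, ← Complex.exp_add, hq, ← Complex.exp_neg]
    congr 1
    push_cast
    field_simp
    ring
  have hββ : β * β = q := by
    rw [hβ, ← Complex.exp_add, hq]
    congr 1
    push_cast
    field_simp
    ring
  -- identification of the four magnetic translations
  have hCz : clockM M (Complex.exp (2 * π * Complex.I * N / M)) = C := by rw [hC, ← hq]
  have hCinv : (clockM M (Complex.exp (2 * π * Complex.I * N / M)))⁻¹ = Ci := by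
    rw [hCz]; exact Matrix.inv_eq_right_inv hCCi
  have hSinv : (shiftM M)⁻¹ = Si := Matrix.inv_eq_right_inv hSSi
  have hD11 : Dop M N 1 1 = α • (C * S) := by
    rw [Dop, zpow_one, zpow_one, hCz, hα]
    norm_num
    rfl
  have hDm11 : Dop M N (-1) 1 = β • (Ci * S) := by
    rw [Dop, Matrix.zpow_neg_one, zpow_one, hCinv, hβ]
    norm_num
    rfl
  have hDm1m1 : Dop M N (-1) (-1) = α • (Ci * Si) := by
    rw [Dop, Matrix.zpow_neg_one, Matrix.zpow_neg_one, hCinv, hSinv, hα]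
    norm_num
  have hD1m1 : Dop M N 1 (-1) = β • (C * Si) := by
    rw [Dop, zpow_one, Matrix.zpow_neg_one, hCz, hSinv, hβ]
    norm_num
  -- the key commutator computation
  set A : Matrix (Fin M) (Fin M) ℂ := Dop M N 1 1 - Dop M N (-1) 1 with hA
  set B : Matrix (Fin M) (Fin M) ℂ := Dop M N (-1) (-1) - Dop M N 1 (-1) with hB
  have hAB : A * B - B * A = (q - q⁻¹) • (C * C - Ci * Ci) := by
    rw [hA, hB, hD11, hDm11, hDm1m1, hD1m1]
    rw [sub_mul, sub_mul, mul_sub, mul_sub, mul_sub, mul_sub]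
    simp only [Matrix.smul_mul, Matrix.mul_smul, smul_smul, mul_assoc]
    rw [h1, h2, h3, h4, g1, g2, g3, g4]
    simp only [smul_smul]
    rw [hαα, hαβ, mul_comm β α, hαβ, hββ]
    rw [inv_mul_cancel₀ hq0, mul_inv_cancel₀ hq0]
    module
  -- powers of the clock matrix
  have hC2 : C ^ (2 : ℤ) = C * C := by
    rw [show (2 : ℤ) = ((2 : ℕ) : ℤ) from rfl, zpow_natCast, sq]
  have hCC_CiCi : (C * C) * (Ci * Ci) = 1 := by
    rw [mul_assoc, ← mul_assoc C Ci, hCCi, one_mul, hCCi]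
  have hCm2 : C ^ (-2 : ℤ) = Ci * Ci := by
    rw [show (-2 : ℤ) = -((2 : ℕ) : ℤ) from rfl, Matrix.zpow_neg_natCast, sq]
    exact Matrix.inv_eq_right_inv hCC_CiCi
  -- put it together
  rw [hJp, hJm, hC2, hCm2]
  by_cases h0 : q - q⁻¹ = 0
  · simp [h0]
  · have h0' : q - q⁻¹ ≠ 0 := h0
    rw [Matrix.smul_mul, Matrix.mul_smul, Matrix.smul_mul, Matrix.mul_smul]
    rw [smul_smul, smul_smul, ← smul_sub, smul_smul]
    rw [hAB, smul_smul]
    congr 1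
    obtain ⟨h, hh⟩ : ∃ h, q - q⁻¹ = h := ⟨_, rfl⟩
    rw [hh] at h0' ⊢
    field_simp [sq]
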